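/- Let H = (V, E) be a finite hypergraph in which every edge is nonempty, and let S ⊆ V be a set containing all isolated vertices of H. For each integer k ≥ 1 let T_k = ℂ \ {(−1)^{k+1} α_1 α_2 ⋯ α_k : α_1, …, α_k ∈ ℂ with |α_i + 1| ≤ 1 for all i}. Then for every assignment of complex numbers (z_e)_{e ∈ E} with z_e ∈ T_{|e|} for every edge e, we have Σ_{F ⊆ E : F covers V∖S} Π_{e ∈ F} z_e ≠ 0, where F covers V∖S means that every vertex of V not in S belongs to some edge of F. -/

import Mathlib

open Finset

/-- The set `T_k = ℂ \ {(-1)^{k+1} α_1 ⋯ α_k : |α_i + 1| ≤ 1 for all i}`. -/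
def Tset (k : ℕ) : Set ℂ :=
  {w : ℂ | ∃ α : Fin k → ℂ, (∀ i, ‖α i + 1‖ ≤ 1) ∧
    w = (-1 : ℂ) ^ (k + 1) * ∏ i, α i}ᶜ

/-- `w` is a product of `k` elements of the closed disk of radius 1 centered at 1. -/
def ProdD (k : ℕ) (w : ℂ) : Prop :=
  ∃ β : Fin k → ℂ, (∀ i, ‖β i - 1‖ ≤ 1) ∧ w = ∏ i, β i

lemma ProdD_zero_iff {w : ℂ} : ProdD 0 w ↔ w = 1 := by
  constructor
  · rintro ⟨β, -, rfl⟩; simp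
  · rintro rfl; exact ⟨fun i => 1, fun i => i.elim0, by simp⟩

lemma ProdD_mul {k : ℕ} {w c : ℂ} (h : ProdD k w) (hc : ‖c - 1‖ ≤ 1) :
    ProdD (k + 1) (w * c) := by
  obtain ⟨β, hβ, rfl⟩ := h
  refine ⟨Fin.cons c β, ?_, ?_⟩
  · intro i
    refine Fin.cases ?_ ?_ i <;> simp [hc, hβ]
  · rw [Fin.prod_cons]; ring

lemma ProdD_succ {k : ℕ} {w : ℂ} (h : ProdD k w) : ProdD (k + 1) w := by
  simpa using ProdD_mul h (c := 1) (by simp)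

lemma ProdD_mono {j k : ℕ} (hjk : j ≤ k) {w : ℂ} (h : ProdD j w) : ProdD k w := by
  induction k with
  | zero => simpa [Nat.le_zero.mp hjk] using h
  | succ k ih =>
    rcases Nat.lt_or_ge j (k+1) with h' | h'
    · exact ProdD_succ (ih (Nat.lt_succ_iff.mp h'))
    · have : j = k + 1 := le_antisymm hjk h'
      subst this; exact h

lemma neg_one_pow_sq (k : ℕ) : ((-1 : ℂ) ^ k) * ((-1 : ℂ) ^ k) = 1 := by
  rw [← pow_add, ← two_mul, pow_mul]; norm_num

lemma prod_neg_fin {k : ℕ} (β : Fin k → ℂ) : ∏ i, (-β i) = (-1 : ℂ) ^ k * ∏ i, β i := by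
  have : ∀ i : Fin k, -β i = (-1 : ℂ) * β i := fun i => by ring
  simp_rw [this]
  rw [Finset.prod_mul_distrib, Finset.prod_const, Finset.card_univ, Fintype.card_fin]

lemma mem_Tset_iff {k : ℕ} {w : ℂ} : w ∈ Tset k ↔ ¬ ProdD k (-w) := by
  unfold Tset
  simp only [Set.mem_compl_iff, Set.mem_setOf_eq]
  constructor
  · intro h hP
    obtain ⟨β, hβ, hw⟩ := hP
    refine h ⟨fun i => -β i, fun i => ?_, ?_⟩
    · rw [show -β i + 1 = -(β i - 1) by ring, norm_neg]
      exact hβ i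
    · rw [prod_neg_fin, ← hw, pow_succ]
      linear_combination (-w) * neg_one_pow_sq k
  · intro h hP
    obtain ⟨α, hα, hw⟩ := hP
    refine h ⟨fun i => -α i, fun i => ?_, ?_⟩
    · rw [show -α i - 1 = -(α i + 1) by ring, norm_neg]
      exact hα i
    · rw [prod_neg_fin, hw, pow_succ]
      ring

variable {V : Type} [DecidableEq V]

/-- The cover sum. -/
noncomputable def Pc (E : Finset (Finset V)) (U : Finset V) (z : Finset V → ℂ) : ℂ :=
  ∑ F ∈ E.powerset.filter (fun F => ∀ v ∈ U, ∃ e ∈ F, v ∈ e), ∏ e ∈ F, z e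

lemma Pc_eq_zero {E : Finset (Finset V)} {U : Finset V} {z : Finset V → ℂ}
    (h : ∃ w ∈ U, ∀ e ∈ E, w ∉ e) : Pc E U z = 0 := by
  obtain ⟨w, hwU, hw⟩ := h
  apply Finset.sum_eq_zero
  intro F hF
  simp only [Finset.mem_filter, Finset.mem_powerset] at hF
  obtain ⟨e, heF, hwe⟩ := hF.2 w hwU
  exact absurd hwe (hw e (hF.1 heF))

lemma Pc_empty {E : Finset (Finset V)} {z : Finset V → ℂ} :
    Pc E ∅ z = ∏ e ∈ E, (z e + 1) := by
  rw [Finset.prod_add]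
  unfold Pc
  rw [Finset.filter_true_of_mem (fun F _ => by simp)]
  simp

/-- Vertex deletion identity. -/
lemma Pc_vertex {E : Finset (Finset V)} {U : Finset V} {z : Finset V → ℂ} {v : V}
    (hv : v ∈ U) :
    Pc E U z = Pc E (U.erase v) z - Pc (E.filter (fun e => v ∉ e)) (U.erase v) z := by
  have key : Pc E (U.erase v) z
      = Pc E U z + Pc (E.filter (fun e => v ∉ e)) (U.erase v) z := by
    unfold Pc
    rw [← Finset.sum_filter_add_sum_filter_not
      (E.powerset.filter (fun F => ∀ u ∈ U.erase v, ∃ e ∈ F, u ∈ e))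
      (fun F => ∃ e ∈ F, v ∈ e)]
    congr 1
    · apply Finset.sum_congr _ (fun _ _ => rfl)
      ext F
      simp only [Finset.mem_filter, Finset.mem_powerset]
      constructor
      · rintro ⟨⟨hFE, hcov⟩, hex⟩
        refine ⟨hFE, fun u hu => ?_⟩
        by_cases huv : u = v
        · subst huv; exact hex
        · exact hcov u (Finset.mem_erase.mpr ⟨huv, hu⟩)
      · rintro ⟨hFE, hcov⟩
        exact ⟨⟨hFE, fun u hu => hcov u (Finset.mem_of_mem_erase hu)⟩, hcov v hv⟩
    · apply Finset.sum_congr _ (fun _ _ => rfl)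
      ext F
      simp only [Finset.mem_filter, Finset.mem_powerset, Finset.subset_iff, not_exists]
      constructor
      · rintro ⟨⟨hFE, hcov⟩, hnex⟩
        push_neg at hnex
        exact ⟨fun x hx => ⟨hFE hx, hnex x hx⟩, hcov⟩
      · rintro ⟨hFE, hcov⟩
        refine ⟨⟨fun x hx => (hFE hx).1, hcov⟩, ?_⟩
        push_neg
        exact fun e he => (hFE he).2
  linear_combination -key

/-- Edge deletion identity. -/
lemma Pc_edge {E : Finset (Finset V)} {U : Finset V} {z : Finset V → ℂ} {e : Finset V}
    (he : e ∈ E) :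
    Pc E U z = Pc (E.erase e) U z + z e * Pc (E.erase e) (U \ e) z := by
  classical
  have hE : E = insert e (E.erase e) := (Finset.insert_erase he).symm
  have hne : e ∉ E.erase e := Finset.notMem_erase e E
  unfold Pc
  rw [Finset.sum_filter, Finset.sum_filter, Finset.sum_filter, Finset.mul_sum]
  conv_lhs => rw [hE, Finset.sum_powerset_insert hne]
  congr 1
  apply Finset.sum_congr rfl
  intro F hF
  have heF : e ∉ F := fun h => hne (Finset.mem_powerset.mp hF h)
  have hcov : (∀ u ∈ U, ∃ f ∈ insert e F, u ∈ f) ↔ (∀ u ∈ U \ e, ∃ f ∈ F, u ∈ f) := by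
    constructor
    · intro h u hu
      obtain ⟨f, hf, huf⟩ := h u (Finset.mem_sdiff.mp hu).1
      rcases Finset.mem_insert.mp hf with rfl | hf
      · exact absurd huf (Finset.mem_sdiff.mp hu).2
      · exact ⟨f, hf, huf⟩
    · intro h u hu
      by_cases hue : u ∈ e
      · exact ⟨e, Finset.mem_insert_self _ _, hue⟩
      · obtain ⟨f, hf, huf⟩ := h u (Finset.mem_sdiff.mpr ⟨hu, hue⟩)
        exact ⟨f, Finset.mem_insert_of_mem hf, huf⟩
  rw [Finset.prod_insert heF]
  by_cases hc : ∀ u ∈ U \ e, ∃ f ∈ F, u ∈ f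
  · rw [if_pos (hcov.mpr hc), if_pos hc]
  · rw [if_neg (fun h => hc (hcov.mp h)), if_neg hc, mul_zero]

lemma main_lemma :
    ∀ (n : ℕ) (E : Finset (Finset V)) (U : Finset V) (z : Finset V → ℂ),
      U.card = n →
      (∀ v ∈ U, ∃ e ∈ E, v ∈ e) →
      (∀ e ∈ E, ¬ ProdD (e ∩ U).card (-z e)) →
      Pc E U z ≠ 0 ∧
        ∀ v ∈ U, ‖Pc (E.filter (fun e => v ∉ e)) (U.erase v) z‖ <
          ‖Pc E (U.erase v) z‖ := by
  intro n
  induction n using Nat.strong_induction_on with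
  | _ n IH =>
  intro E U z hcard hcov hz
  have hA : ∀ (E' : Finset (Finset V)) (U' : Finset V), U'.card < n →
      (∀ v ∈ U', ∃ e ∈ E', v ∈ e) → (∀ e ∈ E', ¬ ProdD (e ∩ U').card (-z e)) →
      Pc E' U' z ≠ 0 :=
    fun E' U' h h1 h2 => (IH _ h E' U' z rfl h1 h2).1
  have hzsub : ∀ (U₁ U₂ : Finset V), U₁ ⊆ U₂ → ∀ e : Finset V,
      ¬ ProdD (e ∩ U₂).card (-z e) → ¬ ProdD (e ∩ U₁).card (-z e) := by
    intro U₁ U₂ hsub e h hP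
    exact h (ProdD_mono (Finset.card_le_card
      (Finset.inter_subset_inter (Finset.Subset.refl e) hsub)) hP)
  -- chain lemma
  have hchain : ∀ (W : Finset V) (E'' : Finset (Finset V)) (U'' : Finset V),
      W ⊆ U'' → U''.card < n → (∀ v ∈ U'', ∃ e ∈ E'', v ∈ e) →
      (∀ e ∈ E'', ¬ ProdD (e ∩ U'').card (-z e)) →
      ∃ d : ℂ, ProdD W.card d ∧ Pc E'' U'' z = d * Pc E'' (U'' \ W) z := by
    intro W
    induction W using Finset.induction_on with
    | empty =>
      intro E'' U'' _ _ _ _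
      exact ⟨1, ProdD_zero_iff.mpr rfl, by simp⟩
    | @insert w W hwW ihW =>
      intro E'' U'' hsub hlt hcov'' hz''
      have hWU : W ⊆ U'' := fun x hx => hsub (Finset.mem_insert_of_mem hx)
      obtain ⟨d, hdP, hPeq⟩ := ihW E'' U'' hWU hlt hcov'' hz''
      set U₂ := U'' \ W with hU₂
      have hwU₂ : w ∈ U₂ := Finset.mem_sdiff.mpr ⟨hsub (Finset.mem_insert_self w W), hwW⟩
      have hU₂sub : U₂ ⊆ U'' := Finset.sdiff_subset
      have hU₂lt : U₂.card < n := lt_of_le_of_lt (Finset.card_le_card hU₂sub) hlt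
      have hcov₂ : ∀ v ∈ U₂, ∃ e ∈ E'', v ∈ e := fun v hv => hcov'' v (hU₂sub hv)
      have hz₂ : ∀ e ∈ E'', ¬ ProdD (e ∩ U₂).card (-z e) :=
        fun e he => hzsub U₂ U'' hU₂sub e (hz'' e he)
      have hB2 := (IH U₂.card hU₂lt E'' U₂ z rfl hcov₂ hz₂).2 w hwU₂
      have hPerase : Pc E'' (U₂.erase w) z ≠ 0 := by
        apply hA E'' (U₂.erase w)
        · exact lt_of_le_of_lt (Finset.card_le_card (Finset.erase_subset _ _)) hU₂lt
        · exact fun v hv => hcov₂ v (Finset.mem_of_mem_erase hv)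
        · exact fun e he => hzsub (U₂.erase w) U₂ (Finset.erase_subset _ _) e (hz₂ e he)
      have hI1 := Pc_vertex (E := E'') (z := z) hwU₂
      set c : ℂ := Pc E'' U₂ z / Pc E'' (U₂.erase w) z with hc
      have hcmul : Pc E'' U₂ z = c * Pc E'' (U₂.erase w) z :=
        (div_mul_cancel₀ _ hPerase).symm
      have hc1 : c - 1 = -(Pc (E''.filter (fun e => w ∉ e)) (U₂.erase w) z
          / Pc E'' (U₂.erase w) z) := by
        rw [hc, hI1]
        field_simp
        ring
      have hcd : ‖c - 1‖ ≤ 1 := by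
        rw [hc1, norm_neg, norm_div]
        exact le_of_lt ((div_lt_one (norm_pos_iff.mpr hPerase)).mpr hB2)
      refine ⟨d * c, ?_, ?_⟩
      · rw [Finset.card_insert_of_notMem hwW]
        exact ProdD_mul hdP hcd
      · rw [Finset.sdiff_insert, ← hU₂, hPeq, hcmul]
        ring
  -- key deletion inequality
  have hCkey : ∀ (m : ℕ) (E' : Finset (Finset V)) (v : V), E'.card ≤ m → v ∈ U →
      (∀ u ∈ U.erase v, ∃ e ∈ E', u ∈ e) →
      (∀ e ∈ E', ¬ ProdD (e ∩ U).card (-z e)) →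
      ‖Pc (E'.filter (fun e => v ∉ e)) (U.erase v) z‖ ≤
        ‖Pc E' (U.erase v) z‖ ∧
      ((∃ e ∈ E', v ∈ e) →
        ‖Pc (E'.filter (fun e => v ∉ e)) (U.erase v) z‖ <
          ‖Pc E' (U.erase v) z‖) := by
    intro m
    induction m with
    | zero =>
      intro E' v hcardE hvU hcov' hz'
      have hE : E' = ∅ := Finset.card_eq_zero.mp (Nat.le_zero.mp hcardE)
      subst hE
      refine ⟨by rw [Finset.filter_empty], ?_⟩
      rintro ⟨e, he, -⟩
      exact absurd he (Finset.notMem_empty e)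
    | succ m ihm =>
      intro E' v hcardE hvU hcov' hz'
      by_cases hex : ∃ e ∈ E', v ∈ e
      swap
      · push_neg at hex
        have hfe : E'.filter (fun e => v ∉ e) = E' :=
          Finset.filter_true_of_mem (fun e he => hex e he)
        rw [hfe]
        exact ⟨le_refl _, fun ⟨e, he, hv'⟩ => absurd hv' (hex e he)⟩
      · obtain ⟨e, heE, hve⟩ := hex
        have hUlt : (U.erase v).card < n := by
          rw [← hcard]; exact Finset.card_erase_lt_of_mem hvU
        have hzU' : ∀ f ∈ E', ¬ ProdD (f ∩ U.erase v).card (-z f) :=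
          fun f hf => hzsub _ U (Finset.erase_subset _ _) f (hz' f hf)
        by_cases hcov2 : ∀ u ∈ U.erase v, ∃ f ∈ E'.erase e, u ∈ f
        · -- main case
          have hE'le : (E'.erase e).card ≤ m := by
            have := Finset.card_erase_add_one heE
            omega
          have hzE'' : ∀ f ∈ E'.erase e, ¬ ProdD (f ∩ U.erase v).card (-z f) :=
            fun f hf => hzU' f (Finset.mem_of_mem_erase hf)
          have hPne : Pc (E'.erase e) (U.erase v) z ≠ 0 := hA _ _ hUlt hcov2 hzE''
          obtain ⟨d, hdP, hPeq⟩ := hchain (e ∩ U.erase v) (E'.erase e) (U.erase v)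
            Finset.inter_subset_right hUlt hcov2 hzE''
          have hsd : U.erase v \ (e ∩ U.erase v) = U.erase v \ e := by
            ext x; simp only [Finset.mem_sdiff, Finset.mem_inter]; tauto
          rw [hsd] at hPeq
          have hdne : d ≠ 0 := fun h => hPne (by rw [hPeq, h, zero_mul])
          have hI2 := Pc_edge (U := U.erase v) (z := z) heE
          have hcardeq : (e ∩ U).card = (e ∩ U.erase v).card + 1 := by
            have h1 : e ∩ U.erase v = (e ∩ U).erase v := by
              ext x; simp only [Finset.mem_inter, Finset.mem_erase]; tauto
            rw [h1]
            exact (Finset.card_erase_add_one (Finset.mem_inter.mpr ⟨hve, hvU⟩)).symm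
          have hkey : 1 < ‖1 + z e / d‖ := by
            by_contra hle
            push_neg at hle
            apply hz' e heE
            rw [hcardeq]
            have hrw : -z e = d * (-(z e) / d) := by
              rw [mul_comm, div_mul_cancel₀ _ hdne]
            rw [hrw]
            apply ProdD_mul hdP
            have hrw2 : -(z e) / d - 1 = -(1 + z e / d) := by
              rw [neg_div]; ring
            rw [hrw2, norm_neg]
            exact hle
          have hfactor : Pc E' (U.erase v) z
              = Pc (E'.erase e) (U.erase v) z * (1 + z e / d) := by
            rw [hI2, hPeq]
            field_simp
          have hlt2 : ‖Pc (E'.erase e) (U.erase v) z‖ <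
              ‖Pc E' (U.erase v) z‖ := by
            rw [hfactor, norm_mul]
            exact (lt_mul_iff_one_lt_right (norm_pos_iff.mpr hPne)).mpr hkey
          have hfil : E'.filter (fun f => v ∉ f) = (E'.erase e).filter (fun f => v ∉ f) := by
            ext f
            simp only [Finset.mem_filter, Finset.mem_erase]
            constructor
            · rintro ⟨hfE, hvf⟩; exact ⟨⟨fun h => hvf (h ▸ hve), hfE⟩, hvf⟩
            · rintro ⟨⟨-, hfE⟩, hvf⟩; exact ⟨hfE, hvf⟩
          have hle1 := (ihm (E'.erase e) v hE'le hvU hcov2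
            (fun f hf => hz' f (Finset.mem_of_mem_erase hf))).1
          rw [hfil]
          exact ⟨le_of_lt (lt_of_le_of_lt hle1 hlt2), fun _ => lt_of_le_of_lt hle1 hlt2⟩
        · -- coverage by E'.erase e fails
          push_neg at hcov2
          obtain ⟨u, huU, hu⟩ := hcov2
          have h0 : Pc (E'.filter (fun f => v ∉ f)) (U.erase v) z = 0 := by
            apply Pc_eq_zero
            refine ⟨u, huU, fun f hf => ?_⟩
            have hf' := Finset.mem_filter.mp hf
            exact hu f (Finset.mem_erase.mpr ⟨fun h => hf'.2 (h ▸ hve), hf'.1⟩)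
          have hne0 : Pc E' (U.erase v) z ≠ 0 := hA E' (U.erase v) hUlt hcov' hzU'
          have hpos : 0 < ‖Pc E' (U.erase v) z‖ := norm_pos_iff.mpr hne0
          rw [h0]
          simp only [norm_zero]
          exact ⟨le_of_lt hpos, fun _ => hpos⟩
  have Bpart : ∀ v ∈ U,
      ‖Pc (E.filter (fun e => v ∉ e)) (U.erase v) z‖ <
        ‖Pc E (U.erase v) z‖ := by
    intro v hv
    exact (hCkey E.card E v le_rfl hv
      (fun u hu => hcov u (Finset.mem_of_mem_erase hu)) hz).2 (hcov v hv)
  refine ⟨?_, Bpart⟩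
  rcases Finset.eq_empty_or_nonempty U with rfl | ⟨v, hv⟩
  · rw [Pc_empty]
    apply Finset.prod_ne_zero_iff.mpr
    intro e he h0
    refine hz e he ?_
    rw [Finset.inter_empty, Finset.card_empty, ProdD_zero_iff]
    linear_combination -h0
  · intro h0
    have hver := Pc_vertex (E := E) (z := z) hv
    rw [h0] at hver
    have heq : Pc E (U.erase v) z = Pc (E.filter (fun e => v ∉ e)) (U.erase v) z := by
      linear_combination -hver
    have hb := Bpart v hv
    rw [heq] at hb
    exact lt_irrefl _ hb

/-- For a hypergraph with nonempty edges `E` and a set `S` containing all isolated vertices,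
the edge cover polynomial of `H` relaxed over `S`, with edge weights `z_e ∈ T_{|e|}`,
does not vanish. -/
theorem relaxed_edge_cover_nonvanishing
    {V : Type} [Fintype V] [DecidableEq V] (E : Finset (Finset V)) (S : Finset V)
    (hne : ∀ e ∈ E, e.Nonempty)
    (hiso : ∀ v : V, (∀ e ∈ E, v ∉ e) → v ∈ S)
    (z : Finset V → ℂ) (hz : ∀ e ∈ E, z e ∈ Tset e.card) :
    (∑ F ∈ E.powerset.filter (fun F => ∀ v : V, v ∉ S → ∃ e ∈ F, v ∈ e),
      ∏ e ∈ F, z e) ≠ 0 := by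
  have hcov : ∀ v ∈ Finset.univ \ S, ∃ e ∈ E, v ∈ e := by
    intro v hv
    by_contra h
    push_neg at h
    exact (Finset.mem_sdiff.mp hv).2 (hiso v h)
  have hzc : ∀ e ∈ E, ¬ ProdD (e ∩ (Finset.univ \ S)).card (-z e) := by
    intro e he hP
    exact (mem_Tset_iff.mp (hz e he))
      (ProdD_mono (Finset.card_le_card Finset.inter_subset_left) hP)
  have hmain := (main_lemma (Finset.univ \ S).card E (Finset.univ \ S) z rfl hcov hzc).1
  have heq : (∑ F ∈ E.powerset.filter (fun F => ∀ v : V, v ∉ S → ∃ e ∈ F, v ∈ e),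
      ∏ e ∈ F, z e) = Pc E (Finset.univ \ S) z := by
    unfold Pc
    congr 1
    ext F
    simp only [Finset.mem_filter, Finset.mem_sdiff, Finset.mem_univ, true_and]
  rw [heq]
  exact hmain
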